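/- For every integer k > 1, every k-irreducible pair {A,B} has length |A| + |B| ≤ 2k − 1, and this bound is attained; that is, ℓ(k) = 2k − 1. -/

import Mathlib

/-- `{A,B}` is an irreducible pair: nonempty multisets of positive integers with equal
sums such that no nonempty proper submultisets `A' < A`, `B' < B` have equal sums. -/
def IrredPair (A B : Multiset ℕ) : Prop :=
  A ≠ 0 ∧ B ≠ 0 ∧ (∀ x ∈ A, 0 < x) ∧ (∀ x ∈ B, 0 < x) ∧
  A.sum = B.sum ∧
  ∀ A' B' : Multiset ℕ, A' < A → B' < B → A' ≠ 0 → B' ≠ 0 → A'.sum ≠ B'.sum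

/-- `{A,B}` is a `k`-irreducible pair: irreducible and all elements are at most `k`. -/
def KIrredPair (k : ℕ) (A B : Multiset ℕ) : Prop :=
  IrredPair A B ∧ (∀ x ∈ A, x ≤ k) ∧ (∀ x ∈ B, x ≤ k)

/-- Maximum element of a multiset of naturals (0 for the empty multiset). -/
def msetMax (S : Multiset ℕ) : ℕ := S.fold max 0

/-- A zero-sum multiset of integers is irreducible if it has no proper nonempty
zero-sum submultiset. -/
def IrredZeroSum (S : Multiset ℤ) : Prop :=
  ¬ ∃ T : Multiset ℤ, T ≤ S ∧ T ≠ 0 ∧ T ≠ S ∧ T.sum = 0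


abbrev St := Multiset ℕ × Multiset ℕ × ℤ

def PStep (k : ℕ) (p q : St) : Prop :=
  (∃ a ∈ p.1, p.2.2 ≤ 0 ∧ q = (p.1.erase a, p.2.1, p.2.2 + (a : ℤ))) ∨
  (∃ b ∈ p.2.1, 0 < p.2.2 ∧ q = (p.1, p.2.1.erase b, p.2.2 - (b : ℤ)))

def TRel (p q : St) : Prop :=
  q.1 ≤ p.1 ∧ q.2.1 ≤ p.2.1 ∧
  Multiset.card q.1 + Multiset.card q.2.1 < Multiset.card p.1 + Multiset.card p.2.1

instance : IsTrans St TRel :=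
  ⟨fun _ _ _ h1 h2 => ⟨h2.1.trans h1.1, h2.2.1.trans h1.2.1, h2.2.2.trans h1.2.2⟩⟩

lemma ne_zero_of_mem' {a : ℕ} {s : Multiset ℕ} (h : a ∈ s) : s ≠ 0 := by
  intro h0; simp [h0] at h

lemma pstep_trel {k : ℕ} {p q : St} (h : PStep k p q) : TRel p q := by
  rcases h with ⟨a, ha, _, rfl⟩ | ⟨b, hb, _, rfl⟩
  · refine ⟨Multiset.erase_le a p.1, le_rfl, ?_⟩
    have h1 : 0 < Multiset.card p.1 := Multiset.card_pos.2 (ne_zero_of_mem' ha)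
    simp only [Multiset.card_erase_of_mem ha, Nat.pred_eq_sub_one]
    omega
  · refine ⟨le_rfl, Multiset.erase_le b p.2.1, ?_⟩
    have h1 : 0 < Multiset.card p.2.1 := Multiset.card_pos.2 (ne_zero_of_mem' hb)
    simp only [Multiset.card_erase_of_mem hb, Nat.pred_eq_sub_one]
    omega

lemma sum_pos_of {s : Multiset ℕ} (h0 : s ≠ 0) (hp : ∀ x ∈ s, 0 < x) : 0 < s.sum := by
  obtain ⟨a, ha⟩ := Multiset.exists_mem_of_ne_zero h0
  exact lt_of_lt_of_le (hp a ha) (Multiset.single_le_sum (fun x _ => Nat.zero_le x) a ha)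

lemma eq_of_le_of_sum_eq {s t : Multiset ℕ} (hle : s ≤ t) (hp : ∀ x ∈ t, 0 < x)
    (hs : s.sum = t.sum) : s = t := by
  obtain ⟨u, rfl⟩ := Multiset.le_iff_exists_add.1 hle
  have hsum : s.sum + u.sum = s.sum + u.sum := rfl
  have h2 : s.sum + u.sum = s.sum := by rw [← Multiset.sum_add, ← hs]
  have hu : u.sum = 0 := by omega
  have : u = 0 := by
    by_contra h0
    have := sum_pos_of h0 (fun x hx => hp x (by simp [hx]))
    omega
  simp [this]

lemma card_le_sum' {s : Multiset ℕ} (hp : ∀ x ∈ s, 0 < x) : Multiset.card s ≤ s.sum := by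
  induction s using Multiset.induction with
  | empty => simp
  | cons a s ih =>
    have ha : 0 < a := hp a (by simp)
    have := ih (fun x hx => hp x (by simp [hx]))
    simp only [Multiset.sum_cons, Multiset.card_cons]
    omega

lemma chain_all {R : St → St → Prop} {Φ : St → Prop}
    (hstep : ∀ p q, R p q → Φ p → Φ q) :
    ∀ {l : List St} {a : St}, List.Chain R a l → Φ a → ∀ x ∈ a :: l, Φ x := by
  intro l
  induction l with
  | nil => intro a _ ha x hx; simp at hx; simpa [hx]
  | cons b l ih =>
    intro a hc ha x hx
    rcases List.chain_cons.1 hc with ⟨hab, hbl⟩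
    rcases List.mem_cons.1 hx with rfl | hx
    · exact ha
    · exact ih hbl (hstep _ _ hab ha) x hx

lemma greedy (k : ℕ) : ∀ (N : ℕ) (A B : Multiset ℕ) (d : ℤ),
    Multiset.card A + Multiset.card B = N →
    (∀ x ∈ A, 0 < x) → (∀ x ∈ B, 0 < x) →
    (B.sum : ℤ) = (A.sum : ℤ) + d →
    ∃ l : List St, List.Chain (PStep k) (A, B, d) l ∧ l.length = N ∧
      ((A, B, d) :: l).getLast (by simp) = ((0 : Multiset ℕ), (0 : Multiset ℕ), (0 : ℤ)) := by
  intro N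
  induction N with
  | zero =>
    intro A B d hcard hA hB hsum
    have hA0 : A = 0 := by rw [← Multiset.card_eq_zero]; omega
    have hB0 : B = 0 := by rw [← Multiset.card_eq_zero]; omega
    subst hA0; subst hB0
    have : d = 0 := by simpa using hsum.symm
    subst this
    exact ⟨[], List.Chain.nil, rfl, rfl⟩
  | succ N ih =>
    intro A B d hcard hA hB hsum
    by_cases hd : d ≤ 0
    · -- pick from A
      have hAne : A ≠ 0 := by
        intro h0
        subst h0
        have hBne : B ≠ 0 := by
          intro h; rw [h] at hcard; simp at hcard
        have h1 := sum_pos_of hBne hB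
        rw [Multiset.sum_zero] at hsum
        have : (1:ℤ) ≤ (B.sum : ℤ) := by exact_mod_cast h1
        omega
      obtain ⟨a, ha⟩ := Multiset.exists_mem_of_ne_zero hAne
      have hsumA : A.sum = a + (A.erase a).sum := by
        conv_lhs => rw [← Multiset.cons_erase ha]
        rw [Multiset.sum_cons]
      have hcard' : Multiset.card (A.erase a) + Multiset.card B = N := by
        have h1 : 0 < Multiset.card A := Multiset.card_pos.2 hAne
        rw [Multiset.card_erase_of_mem ha, Nat.pred_eq_sub_one]
        omega
      obtain ⟨l, hc, hl, hlast⟩ := ih (A.erase a) B (d + a) hcard'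
        (fun x hx => hA x (Multiset.mem_of_le (Multiset.erase_le a A) hx)) hB
        (by rw [hsum, hsumA]; push_cast; ring)
      refine ⟨(A.erase a, B, d + a) :: l, List.chain_cons.2 ⟨Or.inl ⟨a, ha, hd, rfl⟩, hc⟩,
        by simpa using hl, ?_⟩
      rw [List.getLast_cons (by simp)]
      exact hlast
    · push_neg at hd
      have hBne : B ≠ 0 := by
        intro h0
        subst h0
        rw [Multiset.sum_zero] at hsum
        have : (0:ℤ) ≤ (A.sum : ℤ) := by positivity
        omega
      obtain ⟨b, hb⟩ := Multiset.exists_mem_of_ne_zero hBne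
      have hsumB : B.sum = b + (B.erase b).sum := by
        conv_lhs => rw [← Multiset.cons_erase hb]
        rw [Multiset.sum_cons]
      have hcard' : Multiset.card A + Multiset.card (B.erase b) = N := by
        have h1 : 0 < Multiset.card B := Multiset.card_pos.2 hBne
        rw [Multiset.card_erase_of_mem hb, Nat.pred_eq_sub_one]
        omega
      obtain ⟨l, hc, hl, hlast⟩ := ih A (B.erase b) (d - b) hcard'
        hA (fun x hx => hB x (Multiset.mem_of_le (Multiset.erase_le b B) hx))
        (by
          have : ((B.erase b).sum : ℤ) = (B.sum : ℤ) - b := by rw [hsumB]; push_cast; ring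
          rw [this, hsum]; ring)
      refine ⟨(A, B.erase b, d - b) :: l, List.chain_cons.2 ⟨Or.inr ⟨b, hb, hd, rfl⟩, hc⟩,
        by simpa using hl, ?_⟩
      rw [List.getLast_cons (by simp)]
      exact hlast

lemma pstep_defL {k : ℕ} {p q : St} (h : PStep k p q) :
    (∃ a ∈ p.1, p.2.2 ≤ 0 ∧ q = (p.1.erase a, p.2.1, p.2.2 + (a : ℤ))) ∨
    (∃ b ∈ p.2.1, 0 < p.2.2 ∧ q = (p.1, p.2.1.erase b, p.2.2 - (b : ℤ))) := h

lemma trel_def {p q : St} : TRel p q ↔ (q.1 ≤ p.1 ∧ q.2.1 ≤ p.2.1 ∧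
    Multiset.card q.1 + Multiset.card q.2.1 < Multiset.card p.1 + Multiset.card p.2.1) :=
  Iff.rfl

lemma bound (k : ℕ) (hk : 1 < k) (A B : Multiset ℕ) (h : KIrredPair k A B)
    (hAB : ¬ ((k : ℕ) ∈ A ∧ (k : ℕ) ∈ B)) :
    Multiset.card A + Multiset.card B ≤ 2 * k - 1 := by
  obtain ⟨⟨hA0, hB0, hApos, hBpos, hsum, hirr⟩, hAk, hBk⟩ := h
  have hk2 : (2:ℤ) ≤ (k:ℤ) := by exact_mod_cast hk
  obtain ⟨l, hc, hl, hlast⟩ := greedy k (Multiset.card A + Multiset.card B) A B 0 rfl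
    hApos hBpos (by rw [← hsum]; simp)
  set N := Multiset.card A + Multiset.card B with hN
  set L : List St := (A, B, (0:ℤ)) :: l with hL
  -- invariant
  set Φ : St → Prop := fun p => p.1 ≤ A ∧ p.2.1 ≤ B ∧ (p.2.1.sum : ℤ) = (p.1.sum : ℤ) + p.2.2 ∧
    1 - (k:ℤ) ≤ p.2.2 ∧ p.2.2 ≤ (k:ℤ) ∧ (p.2.2 = (k:ℤ) → (k:ℕ) ∈ A) ∧
    (p.2.2 = 1 - (k:ℤ) → (k:ℕ) ∈ B) with hΦdef
  have hΦstep : ∀ p q, PStep k p q → Φ p → Φ q := by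
    intro p q hpq hp
    obtain ⟨hp1, hp2, hpsum, hplow, hpup, hpA, hpB⟩ := hp
    rcases pstep_defL hpq with ⟨a, ha, hd, rfl⟩ | ⟨b, hb, hd, rfl⟩
    · have haA : a ∈ A := Multiset.mem_of_le hp1 ha
      have hapos : 0 < a := hApos a haA
      have hak : a ≤ k := hAk a haA
      have haZ : (1:ℤ) ≤ (a:ℤ) ∧ (a:ℤ) ≤ (k:ℤ) := by
        constructor <;> exact_mod_cast ‹_›
      have hsum1 : (p.1.sum : ℤ) = ((p.1.erase a).sum : ℤ) + a := by
        have : p.1.sum = a + (p.1.erase a).sum := by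
          conv_lhs => rw [← Multiset.cons_erase ha]
          rw [Multiset.sum_cons]
        rw [this]; push_cast; ring
      refine ⟨(Multiset.erase_le a p.1).trans hp1, hp2, by simp only; omega, by simp only; omega,
        by simp only; omega, ?_, by simp only; omega⟩
      · intro hdk
        simp only at hdk
        have : (a:ℤ) = (k:ℤ) := by omega
        have : a = k := by exact_mod_cast this
        subst this
        exact haA
    · have hbB : b ∈ B := Multiset.mem_of_le hp2 hb
      have hbpos : 0 < b := hBpos b hbB
      have hbk : b ≤ k := hBk b hbB
      have hbZ : (1:ℤ) ≤ (b:ℤ) ∧ (b:ℤ) ≤ (k:ℤ) := by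
        constructor <;> exact_mod_cast ‹_›
      have hsum1 : (p.2.1.sum : ℤ) = ((p.2.1.erase b).sum : ℤ) + b := by
        have : p.2.1.sum = b + (p.2.1.erase b).sum := by
          conv_lhs => rw [← Multiset.cons_erase hb]
          rw [Multiset.sum_cons]
        rw [this]; push_cast; ring
      refine ⟨hp1, (Multiset.erase_le b p.2.1).trans hp2, by simp only; omega, by simp only; omega,
        by simp only; omega, by simp only; omega, ?_⟩
      · intro hdk
        simp only at hdk
        have : (b:ℤ) = (k:ℤ) := by omega
        have : b = k := by exact_mod_cast this
        subst this
        exact hbB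
  have hΦhead : Φ (A, B, (0:ℤ)) := by
    refine ⟨le_rfl, le_rfl, by simp only; rw [← hsum]; simp, by simp only; omega,
      by simp only; omega, by simp only; omega, by simp only; omega⟩
  have hΦ : ∀ x ∈ L, Φ x := chain_all hΦstep hc hΦhead
  have hpair : List.Pairwise TRel L :=
    List.isChain_iff_pairwise.1 (List.Chain.imp (fun p q h => pstep_trel h) hc)
  set z : St := ((0 : Multiset ℕ), (0 : Multiset ℕ), (0 : ℤ)) with hz
  have hLne : L ≠ [] := by simp [hL]
  have hsplit : L.dropLast ++ [z] = L := by
    rw [← hlast]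
    exact List.dropLast_append_getLast hLne
  set M := L.dropLast with hM
  have hpair' : List.Pairwise TRel (M ++ [z]) := by rw [hsplit]; exact hpair
  rw [List.pairwise_append] at hpair'
  obtain ⟨hMpair, -, hMz⟩ := hpair'
  have hΦM : ∀ p ∈ M, Φ p := fun p hp => hΦ p (List.dropLast_subset L hp)
  -- distinctness of partial sums on M
  have hne : List.Pairwise (fun p q : St => p.2.2 ≠ q.2.2) M := by
    refine hMpair.imp_of_mem ?_
    intro p q hpM hqM hT heq
    obtain ⟨hp1, hp2, hpsum, -, -, -, -⟩ := hΦM p hpM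
    obtain ⟨hq1, hq2, hqsum, -, -, -, -⟩ := hΦM q hqM
    rw [trel_def] at hT
    obtain ⟨hqp1, hqp2, hcardlt⟩ := hT
    obtain ⟨u, hu⟩ := Multiset.le_iff_exists_add.1 hqp1
    obtain ⟨v, hv⟩ := Multiset.le_iff_exists_add.1 hqp2
    have husum : (u.sum : ℤ) = (v.sum : ℤ) := by
      rw [hu, hv] at hpsum
      rw [Multiset.sum_add, Multiset.sum_add] at hpsum
      omega
    have huv : u.sum = v.sum := by exact_mod_cast husum
    have huA : u ≤ A := le_trans (le_trans (le_add_self) hu.ge) hp1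
    have hvB : v ≤ B := le_trans (le_trans (le_add_self) hv.ge) hp2
    have hupos : ∀ x ∈ u, 0 < x := fun x hx => hApos x (Multiset.mem_of_le huA hx)
    have hvpos : ∀ x ∈ v, 0 < x := fun x hx => hBpos x (Multiset.mem_of_le hvB hx)
    by_cases hu0 : u = 0
    · have hv0 : v = 0 := by
        by_contra hv0
        have := sum_pos_of hv0 hvpos
        rw [hu0] at huv
        simp at huv
        omega
      rw [hu0] at hu; rw [hv0] at hv
      simp at hu hv
      rw [hu, hv] at hcardlt
      omega
    · have hv0 : v ≠ 0 := by
        intro hv0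
        rw [hv0] at huv
        simp at huv
        have := sum_pos_of hu0 hupos
        omega
      by_cases huAe : u = A
      · -- then q = z, impossible in M
        have hvsum : v.sum = B.sum := by rw [← huv, huAe, hsum]
        have hvBe : v = B := eq_of_le_of_sum_eq hvB hBpos hvsum
        have hq10 : q.1 = 0 := by
          have hcard : Multiset.card p.1 ≤ Multiset.card A := Multiset.card_le_card hp1
          rw [hu, huAe] at hcard
          rw [Multiset.card_add] at hcard
          rw [← Multiset.card_eq_zero]
          omega
        have hq20 : q.2.1 = 0 := by
          have hcard : Multiset.card p.2.1 ≤ Multiset.card B := Multiset.card_le_card hp2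
          rw [hv, hvBe] at hcard
          rw [Multiset.card_add] at hcard
          rw [← Multiset.card_eq_zero]
          omega
        have hTz := hMz q hqM z (List.mem_singleton.2 rfl)
        rw [trel_def] at hTz
        rw [hq10, hq20] at hTz
        simp [hz] at hTz
      · have hultA : u < A := lt_of_le_of_ne huA huAe
        by_cases hvBe : v = B
        · have husum' : u.sum = A.sum := by rw [huv, hvBe, hsum]
          exact huAe (eq_of_le_of_sum_eq huA hApos husum')
        · exact hirr u v hultA (lt_of_le_of_ne hvB hvBe) hu0 hv0 huv
  -- counting
  set ds : List ℤ := M.map (fun p : St => p.2.2) with hds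
  have hnd : ds.Nodup := (List.pairwise_map).2 hne
  have hlenM : M.length = N := by
    rw [hM, List.length_dropLast, hL]
    simp [hl]
  have hlends : ds.length = N := by rw [hds, List.length_map, hlenM]
  have hmem : ∀ x ∈ ds, 1 - (k:ℤ) ≤ x ∧ x ≤ (k:ℤ) ∧ (x = (k:ℤ) → (k:ℕ) ∈ A) ∧
      (x = 1 - (k:ℤ) → (k:ℕ) ∈ B) := by
    intro x hx
    obtain ⟨p, hpM, rfl⟩ := List.mem_map.1 hx
    obtain ⟨-, -, -, h4, h5, h6, h7⟩ := hΦM p hpM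
    exact ⟨h4, h5, h6, h7⟩
  classical
  set bad : ℤ := if (k:ℤ) ∈ ds then 1 - (k:ℤ) else (k:ℤ) with hbad
  have hbadnot : bad ∉ ds := by
    by_cases hkin : (k:ℤ) ∈ ds
    · simp only [hbad, if_pos hkin]
      intro hin
      exact hAB ⟨(hmem _ hkin).2.2.1 rfl, (hmem _ hin).2.2.2 rfl⟩
    · simp only [hbad, if_neg hkin]
      exact hkin
  have hsub : ds.toFinset ⊆ (Finset.Icc (1 - (k:ℤ)) (k:ℤ)).erase bad := by
    intro x hx
    rw [List.mem_toFinset] at hx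
    obtain ⟨h1, h2, -, -⟩ := hmem x hx
    rw [Finset.mem_erase]
    exact ⟨fun he => hbadnot (he ▸ hx), Finset.mem_Icc.2 ⟨h1, h2⟩⟩
  have hbadIcc : bad ∈ Finset.Icc (1 - (k:ℤ)) (k:ℤ) := by
    rw [Finset.mem_Icc]
    by_cases hkin : (k:ℤ) ∈ ds <;> simp only [hbad, if_pos, if_neg, hkin] <;> constructor <;> omega
  have hcard1 : ds.toFinset.card = N := by rw [List.toFinset_card_of_nodup hnd, hlends]
  have hcard2 : ((Finset.Icc (1 - (k:ℤ)) (k:ℤ)).erase bad).card = 2 * k - 1 := by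
    rw [Finset.card_erase_of_mem hbadIcc, Int.card_Icc]
    have : ((k:ℤ) + 1 - (1 - (k:ℤ))) = ((2 * k : ℕ) : ℤ) := by push_cast; ring
    rw [this, Int.toNat_natCast]
  have := Finset.card_le_card hsub
  rw [hcard1, hcard2] at this
  exact this

theorem stmt6 (k : ℕ) (hk : 1 < k) :
    (∀ A B : Multiset ℕ, KIrredPair k A B →
      Multiset.card A + Multiset.card B ≤ 2 * k - 1) ∧
    (∃ A B : Multiset ℕ, KIrredPair k A B ∧
      Multiset.card A + Multiset.card B = 2 * k - 1) := by
  constructor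
  · intro A B h
    by_cases hAB : (k : ℕ) ∈ A ∧ (k : ℕ) ∈ B
    · obtain ⟨hkA, hkB⟩ := hAB
      obtain ⟨⟨hA0, hB0, hApos, hBpos, hsum, hirr⟩, hAk, hBk⟩ := h
      by_cases h1 : Multiset.card A = 1
      · obtain ⟨a, rfl⟩ := Multiset.card_eq_one.1 h1
        have ha : a = k := (Multiset.mem_singleton.1 hkA).symm
        have hBsum : B.sum = k := by rw [← hsum, Multiset.sum_singleton, ha]
        have := card_le_sum' hBpos
        rw [hBsum] at this
        simp only [Multiset.card_singleton]
        omega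
      · by_cases h2 : Multiset.card B = 1
        · obtain ⟨b, rfl⟩ := Multiset.card_eq_one.1 h2
          have hb : b = k := (Multiset.mem_singleton.1 hkB).symm
          have hAsum : A.sum = k := by rw [hsum, Multiset.sum_singleton, hb]
          have := card_le_sum' hApos
          rw [hAsum] at this
          simp only [Multiset.card_singleton]
          omega
        · exfalso
          have hcA : 1 ≤ Multiset.card A := by
            rw [Nat.one_le_iff_ne_zero, Ne, Multiset.card_eq_zero]; exact hA0
          have hcB : 1 ≤ Multiset.card B := by
            rw [Nat.one_le_iff_ne_zero, Ne, Multiset.card_eq_zero]; exact hB0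
          have hltA : ({k} : Multiset ℕ) < A := by
            refine lt_of_le_of_ne (Multiset.singleton_le.2 hkA) ?_
            intro he
            rw [← he] at h1
            simp at h1
          have hltB : ({k} : Multiset ℕ) < B := by
            refine lt_of_le_of_ne (Multiset.singleton_le.2 hkB) ?_
            intro he
            rw [← he] at h2
            simp at h2
          exact hirr {k} {k} hltA hltB (by simp) (by simp) rfl
    · exact bound k hk A B h hAB
  · refine ⟨Multiset.replicate (k - 1) k, Multiset.replicate k (k - 1), ⟨⟨?_, ?_, ?_, ?_, ?_, ?_⟩, ?_, ?_⟩, ?_⟩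
    · intro h
      have := congrArg Multiset.card h
      simp only [Multiset.card_replicate, Multiset.card_zero] at this
      omega
    · intro h
      have := congrArg Multiset.card h
      simp only [Multiset.card_replicate, Multiset.card_zero] at this
      omega
    · intro x hx
      rw [Multiset.eq_of_mem_replicate hx]
      omega
    · intro x hx
      rw [Multiset.eq_of_mem_replicate hx]
      omega
    · rw [Multiset.sum_replicate, Multiset.sum_replicate, smul_eq_mul, smul_eq_mul, Nat.mul_comm]
    · intro A' B' hA' hB' hA0 hB0 hsum'
      obtain ⟨i, hik, rfl⟩ := Multiset.le_replicate_iff.1 hA'.le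
      obtain ⟨j, hjk, rfl⟩ := Multiset.le_replicate_iff.1 hB'.le
      have hi1 : 1 ≤ i := by
        by_contra h
        push_neg at h
        interval_cases i
        simp at hA0
      have hj1 : 1 ≤ j := by
        by_contra h
        push_neg at h
        interval_cases j
        simp at hB0
      have hine : i ≠ k - 1 := by
        intro he
        rw [he] at hA'
        exact lt_irrefl _ hA'
      rw [Multiset.sum_replicate, Multiset.sum_replicate, smul_eq_mul, smul_eq_mul] at hsum'
      -- i * k = j * (k - 1), 1 ≤ i ≤ k - 2, 1 ≤ j ≤ k
      have hcast : (i : ℤ) * k = (j : ℤ) * ((k : ℤ) - 1) := by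
        have hk1 : (1:ℕ) ≤ k := by omega
        have : ((k : ℕ) - 1 : ℕ) = ((k : ℤ) - 1 : ℤ).toNat := by omega
        push_cast [hsum']
        have : ((k - 1 : ℕ) : ℤ) = (k : ℤ) - 1 := by
          push_cast [Nat.cast_sub hk1]
          ring
        rw [← this]
        exact_mod_cast hsum'
      have hdvd : (k : ℤ) ∣ (j : ℤ) := ⟨(j : ℤ) - i, by linarith [hcast]⟩
      have hdvd' : k ∣ j := by exact_mod_cast hdvd
      have hjge : k ≤ j := Nat.le_of_dvd (by omega) hdvd'
      have hjeq : j = k := le_antisymm hjk hjge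
      rw [hjeq] at hsum'
      have : i = k - 1 := by
        have h2 : i * k = (k - 1) * k := by rw [hsum']; ring
        exact Nat.eq_of_mul_eq_mul_right (by omega) h2
      exact hine this
    · intro x hx
      rw [Multiset.eq_of_mem_replicate hx]
    · intro x hx
      rw [Multiset.eq_of_mem_replicate hx]
      omega
    · rw [Multiset.card_replicate, Multiset.card_replicate]
      omega
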